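/- The alternating sum Σ_{i=0}^{k-1} (-1)^i (k-1)! k! / (2^{k-1} (k+i)! (k-1-i)!) equals k / ((2k-1) 2^{k-1}). -/

import Mathlib

open Nat

open Finset in
lemma lemA (n : ℕ) : ∀ M : ℕ, ∑ j ∈ range (M+1), (-1:ℚ)^j * ((n+1).choose j) =
    (-1)^M * (n.choose M) := by
  intro M
  induction M with
  | zero => simp
  | succ M ih =>
      rw [Finset.sum_range_succ, ih, Nat.choose_succ_succ]
      push_cast
      ring

open Finset in
lemma lemFull (m : ℕ) : ∑ j ∈ range (2*m+2), (-1:ℚ)^j * ((2*m+1).choose j) = 0 := by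
  have h := lemA (2*m) (2*m+1)
  rw [Nat.choose_eq_zero_of_lt (by omega)] at h
  simpa using h

open Finset in
lemma lemB (m : ℕ) : ∑ i ∈ range (m+1), (-1:ℚ)^i * ((2*m+1).choose (m+1+i)) =
    ((2*m).choose m : ℚ) := by
  have hadd : ∑ j ∈ range ((m+1)+(m+1)), (-1:ℚ)^j * ((2*m+1).choose j)
      = (∑ i ∈ range (m+1), (-1:ℚ)^i * ((2*m+1).choose i))
        + ∑ i ∈ range (m+1), (-1:ℚ)^((m+1)+i) * ((2*m+1).choose ((m+1)+i)) :=
    Finset.sum_range_add _ _ _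
  have h2 : ((m+1)+(m+1)) = 2*m+2 := by ring
  rw [h2, lemFull, lemA (2*m) m] at hadd
  have hfac : ∑ i ∈ range (m+1), (-1:ℚ)^((m+1)+i) * ((2*m+1).choose ((m+1)+i))
      = (-1)^(m+1) * ∑ i ∈ range (m+1), (-1:ℚ)^i * ((2*m+1).choose (m+1+i)) := by
    rw [Finset.mul_sum]
    refine Finset.sum_congr rfl fun i _ => ?_
    rw [pow_add]; ring
  rw [hfac] at hadd
  have key : ((-1:ℚ)^m) *
      (((2*m).choose m : ℚ) - ∑ i ∈ range (m+1), (-1:ℚ)^i * ((2*m+1).choose (m+1+i))) = 0 := by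
    linear_combination -hadd
  rcases mul_eq_zero.mp key with h | h
  · exact absurd h (pow_ne_zero _ (by norm_num))
  · linarith [sub_eq_zero.mp h]

/-- `Σ_{i=0}^{k-1} (-1)^i (k-1)! k! / (2^{k-1} (k+i)! (k-1-i)!) = k / ((2k-1) 2^{k-1})`. -/
theorem stmt_5 (k : ℕ) (hk : 1 ≤ k) :
    ∑ i ∈ Finset.range k,
        (-1 : ℚ) ^ i * ((k - 1)! : ℚ) * (k ! : ℚ) /
          ((2 : ℚ) ^ (k - 1) * ((k + i)! : ℚ) * ((k - 1 - i)! : ℚ)) =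
      (k : ℚ) / (((2 * k : ℚ) - 1) * 2 ^ (k - 1)) := by
  obtain ⟨m, rfl⟩ : ∃ m, k = m + 1 := ⟨k - 1, by omega⟩
  simp only [Nat.add_sub_cancel]
  have hfac : ∀ n : ℕ, ((n ! : ℚ)) ≠ 0 := fun n => Nat.cast_ne_zero.mpr (Nat.factorial_ne_zero n)
  have h2m : ((2:ℚ)^m) ≠ 0 := pow_ne_zero _ (by norm_num)
  have hstep : ∑ i ∈ Finset.range (m+1),
      (-1 : ℚ) ^ i * (m ! : ℚ) * ((m+1)! : ℚ) /
        ((2 : ℚ) ^ m * (((m+1) + i)! : ℚ) * ((m - i)! : ℚ))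
      = ((m ! : ℚ) * ((m+1)! : ℚ) / ((2:ℚ)^m * ((2*m+1)! : ℚ))) *
          ∑ i ∈ Finset.range (m+1), (-1:ℚ)^i * ((2*m+1).choose (m+1+i)) := by
    rw [Finset.mul_sum]
    refine Finset.sum_congr rfl fun i hi => ?_
    have him : i ≤ m := by simpa [Nat.lt_succ_iff] using Finset.mem_range.mp hi
    have hc : (((2*m+1).choose (m+1+i)) : ℚ)
        = ((2*m+1)! : ℚ) / (((m+1+i)! : ℚ) * ((m-i)! : ℚ)) := by
      rw [Nat.cast_choose ℚ (by omega : m+1+i ≤ 2*m+1)]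
      have : 2*m+1 - (m+1+i) = m - i := by omega
      rw [this]
    rw [hc]
    field_simp
  rw [hstep, lemB]
  have hc2 : (((2*m).choose m) : ℚ) = ((2*m)! : ℚ) / ((m ! : ℚ) * (m ! : ℚ)) := by
    rw [Nat.cast_choose ℚ (by omega : m ≤ 2*m)]
    have : 2*m - m = m := by omega
    rw [this]
  have hf1 : ((2*m+1)! : ℚ) = (2*m+1) * ((2*m)! : ℚ) := by
    rw [Nat.factorial_succ]; push_cast; ring
  have hf2 : (((m+1)!) : ℚ) = (m+1) * (m ! : ℚ) := by
    rw [Nat.factorial_succ]; push_cast; ring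
  rw [hc2, hf1, hf2]
  have h2m1 : ((2*m:ℚ)+1) ≠ 0 := by positivity
  have hrw : (2 * (↑(m+1):ℚ) - 1) = 2*(m:ℚ)+1 := by push_cast; ring
  rw [hrw]
  field_simp
  ring
  push_cast; ring
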